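/- Let G be a real Hilbert space, let A : G → Set G be maximally monotone, let β > 0, let B : G → G be β-cocoercive, and let γ ∈ (0, 2β). Let J : G → G satisfy x − J x ∈ {γ u : u ∈ A(J x)} for every x ∈ G (i.e., J is the resolvent of γA), and define F = (1 − γ/(4β))(Id − J ∘ (Id − γB)). Then F is firmly nonexpansive, and for every y ∈ G, F y = 0 if and only if 0 ∈ {u + B y : u ∈ A y} (i.e., y is a zero of A + B). -/
import Mathlib


open RealInnerProductSpace

/-- For a maximally monotone `A`, a `β`-cocoercive `B`, `γ ∈ (0, 2β)`, and the resolvent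
`J` of `γA`, the operator `F = (1 - γ/(4β))(Id - J ∘ (Id - γB))` is firmly nonexpansive
and its zeros are exactly the zeros of `A + B`. -/
theorem forward_backward_residual_firmly_nonexpansive
    {G : Type*} [NormedAddCommGroup G] [InnerProductSpace ℝ G] [CompleteSpace G]
    (A : G → Set G)
    (hmono : ∀ x y u v : G, u ∈ A x → v ∈ A y → ⟪x - y, u - v⟫ ≥ 0)
    (hmax : ∀ x u : G, (∀ y v : G, v ∈ A y → ⟪x - y, u - v⟫ ≥ 0) → u ∈ A x)
    (β : ℝ) (hβ : 0 < β) (B : G → G)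
    (hB : ∀ x y : G, ⟪x - y, B x - B y⟫ ≥ β * ‖B x - B y‖ ^ 2)
    (γ : ℝ) (hγ : γ ∈ Set.Ioo 0 (2 * β))
    (J : G → G) (hJ : ∀ x : G, ∃ u ∈ A (J x), x - J x = γ • u)
    (F : G → G) (hF : ∀ y : G, F y = (1 - γ / (4 * β)) • (y - J (y - γ • B y))) :
    (∀ u v : G, ⟪u - v, F u - F v⟫ ≥ ‖F u - F v‖ ^ 2) ∧
    (∀ y : G, F y = 0 ↔ ∃ u ∈ A y, u + B y = 0) := by
  obtain ⟨hγ0, hγ2β⟩ := hγ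
  set lam : ℝ := 1 - γ / (4 * β) with hlam
  have h4β : (0:ℝ) < 4 * β := by linarith
  have hlampos : 0 < lam := by
    have : γ / (4 * β) < 1 := by rw [div_lt_one h4β]; linarith
    simp only [hlam]; linarith
  constructor
  · intro x y
    obtain ⟨a, haA, ha⟩ := hJ (x - γ • B x)
    obtain ⟨b, hbA, hb⟩ := hJ (y - γ • B y)
    set p := J (x - γ • B x) with hp
    set q := J (y - γ • B y) with hq
    set s := x - y with hs
    set d := (x - p) - (y - q) with hd
    set e := B x - B y with he
    have hpq : p - q = s - d := by simp only [hs, hd]; abel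
    have harg : (x - γ • B x - p) - (y - γ • B y - q) = d - γ • e := by
      simp only [hd, he, smul_sub]; abel
    have hm := hmono p q a b haA hbA
    have h1 : ⟪s - d, d - γ • e⟫ ≥ 0 := by
      rw [← hpq, ← harg, ha, hb, ← smul_sub, real_inner_smul_right]
      exact mul_nonneg hγ0.le hm
    have h2 : ⟪s, e⟫ ≥ β * ‖e‖ ^ 2 := hB x y
    have hC : ⟪d, e⟫ ≤ ‖d‖ * ‖e‖ := real_inner_le_norm d e
    have h1' : ⟪s, d⟫ - γ * ⟪s, e⟫ - ‖d‖ ^ 2 + γ * ⟪d, e⟫ ≥ 0 := by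
      have h := h1
      simp only [inner_sub_left, inner_sub_right, real_inner_smul_right] at h
      have hdd : ⟪d, d⟫ = ‖d‖ ^ 2 := real_inner_self_eq_norm_sq d
      linarith
    have key : ⟪s, d⟫ ≥ lam * ‖d‖ ^ 2 := by
      have hlam4 : 4 * β * lam = 4 * β - γ := by
        simp only [hlam]; field_simp
      have hsq : γ * (2 * β * ‖e‖ - ‖d‖) ^ 2 ≥ 0 :=
        mul_nonneg hγ0.le (sq_nonneg _)
      have hprod : 4 * β * γ * (⟪s, e⟫ - β * ‖e‖ ^ 2) ≥ 0 :=
        mul_nonneg (by positivity) (by linarith)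
      have hprod2 : 4 * β * γ * (‖d‖ * ‖e‖ - ⟪d, e⟫) ≥ 0 :=
        mul_nonneg (by positivity) (by linarith)
      have h4 : 4 * β * ⟪s, d⟫ ≥ (4 * β - γ) * ‖d‖ ^ 2 := by nlinarith
      nlinarith [mul_pos h4β hlampos]
    rw [hF x, hF y, ← hp, ← hq]
    have hFd : lam • (x - p) - lam • (y - q) = lam • d := by
      simp only [hd, smul_sub]
    rw [hFd, real_inner_smul_right, norm_smul, Real.norm_eq_abs,
      abs_of_pos hlampos]
    have := mul_le_mul_of_nonneg_left key hlampos.le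
    nlinarith [sq_nonneg ‖d‖]
  · intro y
    have hlamne : lam ≠ 0 := ne_of_gt hlampos
    obtain ⟨v, hvA, hv⟩ := hJ (y - γ • B y)
    set p := J (y - γ • B y) with hp
    constructor
    · intro hFy
      rw [hF y, ← hp, smul_eq_zero] at hFy
      have hpy : p = y := by
        rcases hFy with h | h
        · exact absurd h hlamne
        · have := sub_eq_zero.mp h; exact this.symm
      refine ⟨v, by rwa [hpy] at hvA, ?_⟩
      have hγv : γ • v = -(γ • B y) := by
        rw [← hv, hpy]; abel
      have : γ • (v + B y) = 0 := by
        rw [smul_add, hγv]; abel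
      rcases smul_eq_zero.mp this with h | h
      · exact absurd h (ne_of_gt hγ0)
      · exact h
    · rintro ⟨u, huA, hu⟩
      have hu' : u = -B y := by
        have : u = 0 - B y := by rw [← hu]; abel
        simpa using this
      have hm := hmono p y v u hvA huA
      have hm' : ⟪p - y, γ • v - γ • u⟫ ≥ 0 := by
        rw [← smul_sub, real_inner_smul_right]
        exact mul_nonneg hγ0.le hm
      have hγv : γ • v = (y - γ • B y) - p := hv.symm
      have hγu : γ • u = -(γ • B y) := by rw [hu', smul_neg]
      have harg : γ • v - γ • u = y - p := by rw [hγv, hγu]; abel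
      rw [harg] at hm'
      have hip : ⟪p - y, y - p⟫ = -‖p - y‖ ^ 2 := by
        have hneg : y - p = -(p - y) := by abel
        rw [hneg, inner_neg_right, real_inner_self_eq_norm_sq]
      rw [hip] at hm'
      have hpy : p = y := by
        have hle : ‖p - y‖ ^ 2 ≤ 0 := by linarith
        have h0 : ‖p - y‖ ^ 2 = 0 := le_antisymm hle (sq_nonneg _)
        have h1 : ‖p - y‖ = 0 := by
          exact pow_eq_zero_iff (two_ne_zero) |>.mp h0
        exact sub_eq_zero.mp (norm_eq_zero.mp h1)
      rw [hF y, ← hp, hpy, sub_self, smul_zero]
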